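/- For every point x in P^1(R), the stabilizer of x in PSL_2(Z) is a cyclic group. -/

import Mathlib

open Classical in
/-- The Möbius action of a `2×2` real matrix on `ℝ ∪ {∞}` (encoded as
`Option ℝ`, with `none` playing the role of `∞`). -/
noncomputable def mobius (M : Matrix (Fin 2) (Fin 2) ℝ) : Option ℝ → Option ℝ
  | some x => if M 1 0 * x + M 1 1 = 0 then none
              else some ((M 0 0 * x + M 0 1) / (M 1 0 * x + M 1 1))
  | none => if M 1 0 = 0 then none else some (M 0 0 / M 1 0)

/-- The Möbius action of an element of `SL₂(ℤ)` on `P¹(ℝ) = ℝ ∪ {∞}`. -/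
noncomputable def mobiusSL (g : Matrix.SpecialLinearGroup (Fin 2) ℤ) :
    Option ℝ → Option ℝ :=
  mobius ((g : Matrix (Fin 2) (Fin 2) ℤ).map (Int.cast : ℤ → ℝ))

instance : Fact (Even (Fintype.card (Fin 2))) := ⟨by simp⟩

abbrev SL2Z := Matrix.SpecialLinearGroup (Fin 2) ℤ

theorem mobius_one (z : Option ℝ) : mobius 1 z = z := by
  cases z <;> simp [mobius, Matrix.one_apply]

theorem mobius_mul (A B : Matrix (Fin 2) (Fin 2) ℝ) (hA : A.det = 1) (hB : B.det = 1)
    (z : Option ℝ) : mobius (A * B) z = mobius A (mobius B z) := by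
  rw [Matrix.det_fin_two] at hA hB
  have hab : ∀ i j, (A * B) i j = A i 0 * B 0 j + A i 1 * B 1 j := by
    intro i j; rw [Matrix.mul_apply, Fin.sum_univ_two]
  cases z with
  | none =>
    by_cases hc : B 1 0 = 0
    · have hd : B 1 1 ≠ 0 := fun h => by rw [hc, h] at hB; simp at hB
      have ha : B 0 0 ≠ 0 := fun h => by rw [hc, h] at hB; simp at hB
      simp only [mobius, hc, if_pos rfl, hab, mul_zero, add_zero]
      by_cases hg : A 1 0 = 0
      · simp [hg, mul_eq_zero, ha]
      · have : A 1 0 * B 0 0 ≠ 0 := mul_ne_zero hg ha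
        simp only [hg, if_neg hg, if_neg this, mobius]
        congr 1
        field_simp
    · simp only [mobius, if_neg hc]
      by_cases hden : A 1 0 * (B 0 0 / B 1 0) + A 1 1 = 0
      · have h2 : A 1 0 * B 0 0 + A 1 1 * B 1 0 = 0 := by
          field_simp at hden; linarith [hden]
        simp [mobius, hab, h2, hden]
      · have h2 : A 1 0 * B 0 0 + A 1 1 * B 1 0 ≠ 0 := by
          intro h; apply hden; field_simp; linarith [h]
        simp only [mobius, hab, if_neg h2, if_neg hden]
        congr 1
        field_simp
        try ring
  | some t =>
    by_cases hD : B 1 0 * t + B 1 1 = 0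
    · have hN : B 0 0 * t + B 0 1 ≠ 0 := by
        intro h
        have : B 0 0 * B 1 1 - B 0 1 * B 1 0 = 0 := by
          linear_combination B 0 0 * hD - B 1 0 * h
        rw [this] at hB; simp at hB
      simp only [mobius, if_pos hD]
      have key : ∀ i, (A * B) i 0 * t + (A * B) i 1
          = A i 0 * (B 0 0 * t + B 0 1) + A i 1 * (B 1 0 * t + B 1 1) := by
        intro i; rw [hab, hab]; ring
      by_cases hg : A 1 0 = 0
      · have : (A * B) 1 0 * t + (A * B) 1 1 = 0 := by rw [key, hD, hg]; ring
        simp [mobius, this, hg]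
      · have h2 : (A * B) 1 0 * t + (A * B) 1 1 ≠ 0 := by
          rw [key, hD, mul_zero, add_zero]; exact mul_ne_zero hg hN
        simp only [mobius, if_neg h2, if_neg hg]
        congr 1
        rw [key 0, key 1, hD, mul_zero, add_zero, mul_zero, add_zero]
        field_simp
    · simp only [mobius, if_neg hD]
      have key : ∀ i, (A * B) i 0 * t + (A * B) i 1
          = A i 0 * (B 0 0 * t + B 0 1) + A i 1 * (B 1 0 * t + B 1 1) := by
        intro i; rw [hab, hab]; ring
      set u := (B 0 0 * t + B 0 1) / (B 1 0 * t + B 1 1) with hu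
      by_cases hd2 : A 1 0 * u + A 1 1 = 0
      · have : (A * B) 1 0 * t + (A * B) 1 1 = 0 := by
          rw [key]
          have := hd2
          rw [hu] at this
          field_simp at this
          have e := div_mul_cancel₀ (B 0 0 * t + B 0 1) hD
          rw [← hu] at e
          rw [← e]
          linear_combination (B 1 0 * t + B 1 1) * hd2
        simp [mobius, this, hd2]
      · have h2 : (A * B) 1 0 * t + (A * B) 1 1 ≠ 0 := by
          intro h; apply hd2
          rw [key] at h
          rw [hu]
          field_simp
          rw [div_add' _ _ _ (by rwa [mul_comm t]), div_eq_zero_iff]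
          left
          linear_combination h
        simp only [mobius, if_neg h2, if_neg hd2]
        congr 1
        rw [key 0, key 1, hu]
        have e : (B 0 0 * t + B 0 1) / (B 1 0 * t + B 1 1) * (B 1 0 * t + B 1 1) = B 0 0 * t + B 0 1 :=
          div_mul_cancel₀ _ hD
        rw [← mul_div_mul_right (A 0 0 * ((B 0 0 * t + B 0 1) / (B 1 0 * t + B 1 1)) + A 0 1) _ hD]
        congr 1
        · linear_combination (-A 0 0) * e
        · linear_combination (-A 1 0) * e

noncomputable def mreal (g : SL2Z) : Matrix (Fin 2) (Fin 2) ℝ :=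
  (g : Matrix (Fin 2) (Fin 2) ℤ).map (Int.cast : ℤ → ℝ)

theorem mreal_apply (g : SL2Z) (i j : Fin 2) : mreal g i j = ((g : Matrix (Fin 2) (Fin 2) ℤ) i j : ℝ) := rfl

theorem detz (g : SL2Z) : (g : Matrix (Fin 2) (Fin 2) ℤ) 0 0 * g.1 1 1 - g.1 0 1 * g.1 1 0 = 1 := by
  have := g.2
  rwa [Matrix.det_fin_two] at this

theorem mreal_det (g : SL2Z) : (mreal g).det = 1 := by
  rw [Matrix.det_fin_two]
  have := detz g
  simp only [mreal_apply]
  exact_mod_cast congrArg (Int.cast : ℤ → ℝ) this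

theorem mreal_mul (g h : SL2Z) : mreal (g * h) = mreal g * mreal h := by
  ext i j
  simp only [mreal_apply, Matrix.SpecialLinearGroup.coe_mul, Matrix.mul_apply,
    Fin.sum_univ_two, mreal, Matrix.map_apply]
  push_cast
  ring

theorem mreal_one : mreal 1 = 1 := by
  ext i j
  simp only [mreal_apply, Matrix.SpecialLinearGroup.coe_one]
  fin_cases i <;> fin_cases j <;> simp

theorem mreal_neg (g : SL2Z) : mreal (-g) = - mreal g := by
  ext i j
  simp [mreal_apply, Matrix.SpecialLinearGroup.coe_neg]

theorem mobiusSL_eq (g : SL2Z) : mobiusSL g = mobius (mreal g) := rfl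

theorem mobiusSL_mul (g h : SL2Z) (z : Option ℝ) :
    mobiusSL (g * h) z = mobiusSL g (mobiusSL h z) := by
  rw [mobiusSL_eq, mobiusSL_eq, mobiusSL_eq, mreal_mul]
  exact mobius_mul _ _ (mreal_det g) (mreal_det h) z

theorem mobiusSL_one (z : Option ℝ) : mobiusSL 1 z = z := by
  rw [mobiusSL_eq, mreal_one]; exact mobius_one z

theorem mobiusSL_neg (g : SL2Z) (z : Option ℝ) : mobiusSL (-g) z = mobiusSL g z := by
  rw [mobiusSL_eq, mobiusSL_eq, mreal_neg]
  cases z with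
  | none =>
    by_cases h : mreal g 1 0 = 0 <;> simp [mobius, h, neg_div_neg_eq]
  | some t =>
    by_cases h : mreal g 1 0 * t + mreal g 1 1 = 0
    · have : -mreal g 1 0 * t + -(mreal g 1 1) = 0 := by linarith
      simp only [mobius, Matrix.neg_apply, if_pos h]
      exact if_pos this
    · have h2 : -mreal g 1 0 * t + -(mreal g 1 1) ≠ 0 := by
        intro hc; apply h; linarith
      simp only [mobius, Matrix.neg_apply, if_neg h]
      refine (if_neg h2).trans ?_
      congr 1
      show (-mreal g 0 0 * t + -(mreal g 0 1)) / (-mreal g 1 0 * t + -(mreal g 1 1)) = _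
      rw [div_eq_div_iff h2 h]; ring

theorem mobiusSL_inv_fix {g : SL2Z} {z : Option ℝ} (h : mobiusSL g z = z) :
    mobiusSL g⁻¹ z = z := by
  conv_lhs => rw [← h, ← mobiusSL_mul, inv_mul_cancel, mobiusSL_one]

/-- T = [[1,1],[0,1]] -/
def Tmat : SL2Z := ⟨!![1, 1; 0, 1], by simp [Matrix.det_fin_two_of]⟩

theorem Tpow (n : ℤ) : ((Tmat ^ n : SL2Z) : Matrix (Fin 2) (Fin 2) ℤ) = !![1, n; 0, 1] := by
  have key : ∀ m : ℤ, ((Tmat ^ m : SL2Z) : Matrix (Fin 2) (Fin 2) ℤ) = !![1, m; 0, 1] →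
      ((Tmat ^ (m + 1) : SL2Z) : Matrix (Fin 2) (Fin 2) ℤ) = !![1, m + 1; 0, 1] := by
    intro m hm
    rw [zpow_add_one, Matrix.SpecialLinearGroup.coe_mul, hm]
    show (!![1, m; 0, 1] : Matrix (Fin 2) (Fin 2) ℤ) * !![1, 1; 0, 1] = _
    ext i j
    fin_cases i <;> fin_cases j <;>
      simp [Matrix.mul_apply, Fin.sum_univ_two] <;> ring
  have key' : ∀ m : ℤ, ((Tmat ^ (m + 1) : SL2Z) : Matrix (Fin 2) (Fin 2) ℤ) = !![1, m + 1; 0, 1] →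
      ((Tmat ^ m : SL2Z) : Matrix (Fin 2) (Fin 2) ℤ) = !![1, m; 0, 1] := by
    intro m hm
    have h1 : (Tmat ^ m : SL2Z) = Tmat ^ (m + 1) * Tmat⁻¹ := by
      rw [zpow_add_one]; group
    have hTinv : ((Tmat⁻¹ : SL2Z) : Matrix (Fin 2) (Fin 2) ℤ) = !![1, -1; 0, 1] := by
      rw [Matrix.SpecialLinearGroup.SL2_inv_expl]
      rfl
    rw [h1, Matrix.SpecialLinearGroup.coe_mul, hm, hTinv]
    ext i j
    fin_cases i <;> fin_cases j <;>
      simp [Matrix.mul_apply, Fin.sum_univ_two]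
  induction n using Int.induction_on with
  | zero => simp [Matrix.SpecialLinearGroup.coe_one]; ext i j; fin_cases i <;> fin_cases j <;> simp
  | succ k ih => exact_mod_cast key k (by exact_mod_cast ih)
  | pred k ih =>
    exact key' (-(k:ℤ)-1) (by rw [show (-(k:ℤ)-1+1) = -k by ring]; exact ih)

/-- classification of the stabilizer of ∞ -/
theorem stab_none (g : SL2Z) (h : mobiusSL g none = none) :
    ∃ n : ℤ, g = Tmat ^ n ∨ g = -(Tmat ^ n) := by
  have hc : (g : Matrix (Fin 2) (Fin 2) ℤ) 1 0 = 0 := by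
    by_contra hc
    have : ((g.1 1 0 : ℤ) : ℝ) ≠ 0 := Int.cast_ne_zero.2 hc
    simp [mobiusSL, mobius, Matrix.map_apply, this] at h
  have hdet : g.1 0 0 * g.1 1 1 = 1 := by
    have := g.2
    rw [Matrix.det_fin_two] at this
    rw [hc] at this; linarith
  rcases Int.eq_one_or_neg_one_of_mul_eq_one' hdet with ⟨ha, hd⟩ | ⟨ha, hd⟩
  · refine ⟨g.1 0 1, Or.inl ?_⟩
    apply Subtype.ext
    rw [Tpow]
    ext i j
    fin_cases i <;> fin_cases j <;> simp [ha, hd, hc]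
  · refine ⟨-g.1 0 1, Or.inr ?_⟩
    apply Subtype.ext
    rw [Matrix.SpecialLinearGroup.coe_neg, Tpow]
    ext i j
    fin_cases i <;> fin_cases j <;> simp [ha, hd, hc]

theorem rat_linear {x : ℝ} (hx : Irrational x) {α β : ℚ} (h : (α : ℝ) * x + β = 0) :
    α = 0 ∧ β = 0 := by
  by_cases hα : α = 0
  · refine ⟨hα, ?_⟩
    rw [hα] at h
    simpa using h
  · exfalso
    apply hx
    refine ⟨-β / α, ?_⟩
    have hα' : (α : ℝ) ≠ 0 := by exact_mod_cast hα
    push_cast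
    field_simp
    linarith

theorem int_linear {x : ℝ} (hx : Irrational x) {a b : ℤ} (h : (a : ℝ) * x + b = 0) :
    a = 0 ∧ b = 0 := by
  have := rat_linear hx (α := (a : ℚ)) (β := (b : ℚ)) (by push_cast; exact h)
  exact_mod_cast this

theorem fix_iff {x : ℝ} (hx : Irrational x) (g : SL2Z) :
    mobiusSL g (some x) = some x ↔
      (g.1 0 0 : ℝ) * x + g.1 0 1 = x * ((g.1 1 0 : ℝ) * x + g.1 1 1) := by
  have hdet := detz g
  by_cases hden : (g.1 1 0 : ℝ) * x + g.1 1 1 = 0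
  · constructor
    · intro h
      exfalso
      simp [mobiusSL, mobius, Matrix.map_apply, hden] at h
    · intro h
      exfalso
      rw [hden, mul_zero] at h
      obtain ⟨ha, hb⟩ := int_linear hx h
      obtain ⟨hc, hd⟩ := int_linear hx hden
      rw [ha, hb, hc, hd] at hdet
      simp at hdet
  · simp only [mobiusSL, mobius, Matrix.map_apply, if_neg hden, Option.some_inj]
    show (if (g.1 1 0 : ℝ) * x + g.1 1 1 = 0 then none else some (((g.1 0 0 : ℝ) * x + g.1 0 1) / ((g.1 1 0 : ℝ) * x + g.1 1 1))) = some x ↔ _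
    rw [if_neg hden, Option.some_inj, div_eq_iff hden]

theorem quad_case (x : ℝ) (hx : Irrational x) (p q : ℚ) (hpq : x ^ 2 = p * x + q) :
    ∃ g₀ : SL2Z, mobiusSL g₀ (some x) = some x ∧
      ∀ g : SL2Z, mobiusSL g (some x) = some x →
        ∃ n : ℤ, g = g₀ ^ n ∨ g = -(g₀ ^ n) := by
  -- the multiplier map
  set φ : SL2Z → ℝ := fun g => (g.1 1 0 : ℝ) * x + g.1 1 1 with hφ
  -- relations satisfied by fixing elements
  have rel : ∀ g : SL2Z, mobiusSL g (some x) = some x →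
      ((g.1 0 0 : ℚ) = g.1 1 1 + g.1 1 0 * p ∧ (g.1 0 1 : ℚ) = g.1 1 0 * q) := by
    intro g hg
    rw [fix_iff hx] at hg
    have key : (((g.1 0 0 : ℚ) - g.1 1 1 - g.1 1 0 * p : ℚ) : ℝ) * x
        + (((g.1 0 1 : ℚ) - g.1 1 0 * q : ℚ) : ℝ) = 0 := by
      push_cast
      linear_combination hg + (g.1 1 0 : ℝ) * hpq
    obtain ⟨h1, h2⟩ := rat_linear hx key
    constructor <;> linarith
  have φ_ne : ∀ g : SL2Z, mobiusSL g (some x) = some x → φ g ≠ 0 := by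
    intro g hg h0
    rw [fix_iff hx] at hg
    simp only [hφ] at h0
    rw [h0, mul_zero] at hg
    obtain ⟨ha, hb⟩ := int_linear hx hg
    obtain ⟨hc, hd⟩ := int_linear hx h0
    have hdet := detz g
    rw [ha, hb, hc, hd] at hdet
    simp at hdet
  have φ_mul : ∀ g h : SL2Z, mobiusSL h (some x) = some x → φ (g * h) = φ g * φ h := by
    intro g h hh
    rw [fix_iff hx] at hh
    have e10 : ((g * h : SL2Z).1 1 0 : ℝ) = (g.1 1 0 : ℝ) * h.1 0 0 + g.1 1 1 * h.1 1 0 := by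
      rw [Matrix.SpecialLinearGroup.coe_mul, Matrix.mul_apply, Fin.sum_univ_two]
      push_cast; ring
    have e11 : ((g * h : SL2Z).1 1 1 : ℝ) = (g.1 1 0 : ℝ) * h.1 0 1 + g.1 1 1 * h.1 1 1 := by
      rw [Matrix.SpecialLinearGroup.coe_mul, Matrix.mul_apply, Fin.sum_univ_two]
      push_cast; ring
    simp only [hφ]
    rw [e10, e11]
    linear_combination (g.1 1 0 : ℝ) * hh
  have injφ : ∀ g h : SL2Z, mobiusSL g (some x) = some x → mobiusSL h (some x) = some x →
      φ g = φ h → g = h := by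
    intro g h hg hh he
    have hcd : (((g.1 1 0 - h.1 1 0 : ℤ) : ℝ)) * x + ((g.1 1 1 - h.1 1 1 : ℤ) : ℝ) = 0 := by
      push_cast
      simp only [hφ] at he
      linarith
    obtain ⟨hc, hd⟩ := int_linear hx hcd
    have hc' : g.1 1 0 = h.1 1 0 := by linarith [hc]
    have hd' : g.1 1 1 = h.1 1 1 := by linarith [hd]
    obtain ⟨hga, hgb⟩ := rel g hg
    obtain ⟨hha, hhb⟩ := rel h hh
    have ha' : g.1 0 0 = h.1 0 0 := by
      have : (g.1 0 0 : ℚ) = (h.1 0 0 : ℚ) := by rw [hga, hha, hc', hd']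
      exact_mod_cast this
    have hb' : g.1 0 1 = h.1 0 1 := by
      have : (g.1 0 1 : ℚ) = (h.1 0 1 : ℚ) := by rw [hgb, hhb, hc']
      exact_mod_cast this
    apply Subtype.ext
    ext i j
    fin_cases i <;> fin_cases j <;> assumption
  have φ_one : φ (1 : SL2Z) = 1 := by
    simp only [hφ, Matrix.SpecialLinearGroup.coe_one, Matrix.one_apply]
    norm_num
  have φ_neg : ∀ g : SL2Z, φ (-g) = - φ g := by
    intro g
    simp only [hφ, Matrix.SpecialLinearGroup.coe_neg, Matrix.neg_apply]
    push_cast; ring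
  have hΔpos : (0:ℝ) < |2 * x - (p:ℝ)| := by
    rw [abs_pos]
    intro h0
    have := rat_linear hx (α := 2) (β := -p) (by push_cast; linarith)
    norm_num at this
  set Δ := |2 * x - (p:ℝ)| with hΔ
  set ε := min (1/2 : ℝ) (Δ/8) with hε
  have hεpos : 0 < ε := lt_min (by norm_num) (by linarith)
  have hεhalf : ε ≤ 1/2 := min_le_left _ _
  have hεΔ : ε ≤ Δ/8 := min_le_right _ _
  clear_value Δ ε
  have small : ∀ g : SL2Z, mobiusSL g (some x) = some x → |φ g - 1| < ε → g = 1 := by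
    intro g hg hsmall
    obtain ⟨hga, hgb⟩ := rel g hg
    have hA : (g.1 0 0 : ℝ) = (g.1 1 1 : ℝ) + (g.1 1 0 : ℝ) * p := by exact_mod_cast hga
    have hB : (g.1 0 1 : ℝ) = (g.1 1 0 : ℝ) * q := by exact_mod_cast hgb
    have hdet : (g.1 0 0 : ℝ) * g.1 1 1 - g.1 0 1 * g.1 1 0 = 1 := by exact_mod_cast detz g
    set u := φ g with hu
    set v := (g.1 1 0 : ℝ) * ((p:ℝ) - x) + g.1 1 1 with hv
    clear_value u v
    have conj : u * v = 1 := by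
      rw [hu, hv]
      simp only [hφ]
      linear_combination (-((g.1 1 0 : ℝ))^2) * hpq + (-((g.1 1 1 : ℝ))) * hA
        + ((g.1 1 0 : ℝ)) * hB + hdet
    obtain ⟨hl, hr⟩ := abs_lt.1 hsmall
    have hu2 : (1:ℝ)/2 ≤ u := by linarith
    have hupos : (0:ℝ) < u := by linarith
    have hdiff : u - v = (g.1 1 0 : ℝ) * (2 * x - p) := by
      rw [hu, hv]; simp only [hφ]; ring
    have hsq : u * (u - v) = u^2 - 1 := by
      rw [mul_sub, conj]; ring
    have habs1 : u * |u - v| = |u^2 - 1| := by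
      rw [← hsq, abs_mul, abs_of_pos hupos]
    have habs2 : |u^2 - 1| < 3 * ε := by
      have h1 : |u^2 - 1| = |u - 1| * |u + 1| := by
        rw [← abs_mul]; congr 1; ring
      have h2 : |u + 1| ≤ 5/2 := by
        rw [abs_le]; constructor <;> linarith
      rw [h1]
      calc |u - 1| * |u + 1| ≤ |u - 1| * (5/2) := by
            apply mul_le_mul_of_nonneg_left h2 (abs_nonneg _)
        _ < 3 * ε := by nlinarith [abs_nonneg (u-1)]
    have habs3 : |u - v| < 6 * ε := by
      nlinarith [abs_nonneg (u - v)]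
    have hcabs : |(g.1 1 0 : ℝ)| * Δ < Δ := by
      have : |(g.1 1 0 : ℝ)| * Δ = |u - v| := by
        rw [hdiff, abs_mul, hΔ]
      rw [this]
      calc |u - v| < 6 * ε := habs3
        _ ≤ 6 * (Δ/8) := by linarith
        _ < Δ := by linarith
    have hclt : |(g.1 1 0 : ℝ)| < 1 := by
      have := lt_of_mul_lt_mul_right (by linarith [hcabs] : |(g.1 1 0 : ℝ)| * Δ < 1 * Δ) hΔpos.le
      exact this
    have hc0 : g.1 1 0 = 0 := by
      have h1 : ((|g.1 1 0| : ℤ) : ℝ) < 1 := by rw [Int.cast_abs]; exact hclt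
      have h2 : |g.1 1 0| < 1 := by exact_mod_cast h1
      rcases abs_lt.1 h2 with ⟨h3, h4⟩
      omega
    have hud : u = (g.1 1 1 : ℝ) := by
      rw [hu]; simp only [hφ]; rw [hc0]; push_cast; ring
    have hd1 : g.1 1 1 = 1 := by
      have h1 : (1:ℝ)/2 < (g.1 1 1 : ℝ) := by rw [← hud]; linarith
      have h2 : (g.1 1 1 : ℝ) < 2 := by rw [← hud]; linarith
      have h3 : (0:ℤ) < g.1 1 1 := by exact_mod_cast lt_trans (by norm_num : (0:ℝ) < 1/2) h1
      have h4 : g.1 1 1 < (2:ℤ) := by exact_mod_cast h2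
      omega
    have ha1 : g.1 0 0 = 1 := by
      have : (g.1 0 0 : ℚ) = 1 := by rw [hga, hc0, hd1]; push_cast; ring
      exact_mod_cast this
    have hb0 : g.1 0 1 = 0 := by
      have : (g.1 0 1 : ℚ) = 0 := by rw [hgb, hc0]; push_cast; ring
      exact_mod_cast this
    apply Subtype.ext
    rw [Matrix.SpecialLinearGroup.coe_one]
    ext i j
    fin_cases i <;> fin_cases j <;> simp [ha1, hb0, hc0, hd1, Matrix.one_apply]
  -- the stabilizer subgroup
  let S : Subgroup SL2Z :=
    { carrier := {g | mobiusSL g (some x) = some x}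
      one_mem' := mobiusSL_one _
      mul_mem' := fun {g h} hg hh => by
        simp only [Set.mem_setOf_eq] at *
        rw [mobiusSL_mul, hh, hg]
      inv_mem' := fun {g} hg => mobiusSL_inv_fix hg }
  have hmemS : ∀ g : SL2Z, g ∈ S ↔ mobiusSL g (some x) = some x := fun g => Iff.rfl
  have φ_inv : ∀ g : SL2Z, g ∈ S → φ g⁻¹ = (φ g)⁻¹ := by
    intro g hg
    have h1 : φ (g⁻¹ * g) = φ g⁻¹ * φ g := φ_mul _ _ ((hmemS g).1 hg)
    rw [inv_mul_cancel, φ_one] at h1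
    exact eq_inv_of_mul_eq_one_left h1.symm
  have φ_pow : ∀ g : SL2Z, g ∈ S → ∀ n : ℕ, φ (g ^ n) = (φ g) ^ n := by
    intro g hg n
    induction n with
    | zero => simpa using φ_one
    | succ k ih =>
      rw [pow_succ, pow_succ, φ_mul _ _ ((hmemS g).1 hg), ih]
  have φ_zpow : ∀ g : SL2Z, g ∈ S → ∀ n : ℤ, φ (g ^ n) = (φ g) ^ n := by
    intro g hg n
    cases n with
    | ofNat k => rw [Int.ofNat_eq_coe, zpow_natCast, zpow_natCast, φ_pow g hg]
    | negSucc k =>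
      rw [zpow_negSucc, zpow_negSucc, φ_inv _ (pow_mem hg (k+1)), φ_pow g hg]
  -- the log-subgroup of ℝ
  have absφpos : ∀ g : SL2Z, g ∈ S → 0 < |φ g| :=
    fun g hg => abs_pos.2 (φ_ne g ((hmemS g).1 hg))
  let L : AddSubgroup ℝ :=
    { carrier := {y | ∃ g ∈ S, Real.log |φ g| = y}
      zero_mem' := ⟨1, S.one_mem, by rw [φ_one]; simp⟩
      add_mem' := by
        rintro y z ⟨g, hg, rfl⟩ ⟨h, hh, rfl⟩
        refine ⟨g * h, S.mul_mem hg hh, ?_⟩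
        rw [φ_mul _ _ ((hmemS h).1 hh), abs_mul,
          Real.log_mul (ne_of_gt (absφpos g hg)) (ne_of_gt (absφpos h hh))]
      neg_mem' := by
        rintro y ⟨g, hg, rfl⟩
        refine ⟨g⁻¹, S.inv_mem hg, ?_⟩
        rw [φ_inv g hg, abs_inv, Real.log_inv] }
  rcases AddSubgroup.dense_or_cyclic L with hdense | ⟨l₀, hl₀⟩
  · -- dense case: contradiction with discreteness
    exfalso
    have hlogpos : 0 < Real.log (1 + ε) := Real.log_pos (by linarith)
    obtain ⟨y, hyI, hyL⟩ : ((Set.Ioo 0 (Real.log (1+ε))) ∩ (L : Set ℝ)).Nonempty := by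
      apply dense_iff_inter_open.1 hdense _ isOpen_Ioo
      exact ⟨Real.log (1+ε)/2, by constructor <;> linarith⟩
    obtain ⟨g, hg, hlog⟩ := hyL
    obtain ⟨hy0, hyε⟩ := hyI
    have h1 : 1 < |φ g| := by
      have := Real.exp_log (absφpos g hg)
      rw [hlog] at this
      calc (1:ℝ) = Real.exp 0 := by rw [Real.exp_zero]
        _ < Real.exp y := Real.exp_lt_exp.2 hy0
        _ = |φ g| := this
    have h2 : |φ g| < 1 + ε := by
      have := Real.exp_log (absφpos g hg)
      rw [hlog] at this
      calc |φ g| = Real.exp y := this.symm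
        _ < Real.exp (Real.log (1+ε)) := Real.exp_lt_exp.2 hyε
        _ = 1 + ε := Real.exp_log (by linarith)
    -- replace g by ±g so that the multiplier is positive
    have hgfix := (hmemS g).1 hg
    by_cases hsign : 0 ≤ φ g
    · have habs : |φ g| = φ g := abs_of_nonneg hsign
      rw [habs] at h1 h2
      have := small g hgfix (by rw [abs_lt]; constructor <;> linarith)
      rw [this, φ_one] at h1
      linarith
    · have habs : |φ g| = φ (-g) := by rw [φ_neg, abs_of_neg (lt_of_not_ge hsign)]
      rw [habs] at h1 h2
      have hnegfix : mobiusSL (-g) (some x) = some x := by rw [mobiusSL_neg]; exact hgfix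
      have := small (-g) hnegfix (by rw [abs_lt]; constructor <;> linarith)
      rw [this, φ_one] at h1
      linarith
  · -- cyclic case
    have hl₀L : l₀ ∈ L := by
      rw [hl₀]
      exact AddSubgroup.subset_closure (Set.mem_singleton l₀)
    obtain ⟨g₀, hg₀S, hlogg₀⟩ := hl₀L
    refine ⟨g₀, (hmemS g₀).1 hg₀S, ?_⟩
    intro g hg
    have hgS : g ∈ S := (hmemS g).2 hg
    have hmem : Real.log |φ g| ∈ L := ⟨g, hgS, rfl⟩
    rw [hl₀, AddSubgroup.mem_closure_singleton] at hmem
    obtain ⟨n, hn⟩ := hmem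
    refine ⟨n, ?_⟩
    have hgnS : (g₀ ^ n : SL2Z) ∈ S := zpow_mem hg₀S n
    have habs : |φ (g₀ ^ n)| = |φ g| := by
      have h1 : Real.log |φ (g₀ ^ n)| = Real.log |φ g| := by
        rw [φ_zpow g₀ hg₀S n, Real.log_abs, Real.log_zpow, ← Real.log_abs (φ g₀),
          hlogg₀, ← hn, zsmul_eq_mul]
      calc |φ (g₀ ^ n)| = Real.exp (Real.log |φ (g₀ ^ n)|) :=
            (Real.exp_log (absφpos _ hgnS)).symm
        _ = Real.exp (Real.log |φ g|) := by rw [h1]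
        _ = |φ g| := Real.exp_log (absφpos _ hgS)
    have hgnfix : mobiusSL (g₀ ^ n) (some x) = some x := (hmemS _).1 hgnS
    rcases abs_eq_abs.1 habs with heq | heq
    · exact Or.inl (injφ g (g₀ ^ n) hg hgnfix heq.symm)
    · refine Or.inr (injφ g (-(g₀ ^ n)) hg ?_ ?_)
      · rw [mobiusSL_neg]; exact hgnfix
      · rw [φ_neg]; linarith [heq]

theorem nonquad_case (x : ℝ) (hx : Irrational x)
    (hnq : ¬ ∃ p q : ℚ, x ^ 2 = (p : ℝ) * x + q) :
    ∃ g₀ : SL2Z, mobiusSL g₀ (some x) = some x ∧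
      ∀ g : SL2Z, mobiusSL g (some x) = some x →
        ∃ n : ℤ, g = g₀ ^ n ∨ g = -(g₀ ^ n) := by
  refine ⟨1, mobiusSL_one _, ?_⟩
  intro g hg
  rw [fix_iff hx] at hg
  have hc : g.1 1 0 = 0 := by
    by_contra hc
    apply hnq
    have hc' : ((g.1 1 0 : ℤ) : ℝ) ≠ 0 := Int.cast_ne_zero.2 hc
    refine ⟨((g.1 0 0 - g.1 1 1 : ℤ) : ℚ) / ((g.1 1 0 : ℤ) : ℚ),
            ((g.1 0 1 : ℤ) : ℚ) / ((g.1 1 0 : ℤ) : ℚ), ?_⟩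
    push_cast
    field_simp
    nlinarith [hg]
  have hlin : ((g.1 0 0 - g.1 1 1 : ℤ) : ℝ) * x + (g.1 0 1 : ℤ) = 0 := by
    push_cast
    have h0 : ((g.1 1 0 : ℤ) : ℝ) = 0 := by exact_mod_cast hc
    linear_combination hg + x ^ 2 * h0
  obtain ⟨had, hb⟩ := int_linear hx hlin
  have hdet := detz g
  rw [hb, hc] at hdet
  have had' : g.1 0 0 = g.1 1 1 := by omega
  have hmul : g.1 0 0 * g.1 1 1 = 1 := by omega
  rcases Int.eq_one_or_neg_one_of_mul_eq_one' hmul with ⟨ha, hd⟩ | ⟨ha, hd⟩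
  · refine ⟨0, Or.inl ?_⟩
    apply Subtype.ext
    rw [zpow_zero, Matrix.SpecialLinearGroup.coe_one]
    ext i j
    fin_cases i <;> fin_cases j <;> simp [ha, hb, hc, hd, Matrix.one_apply]
  · refine ⟨0, Or.inr ?_⟩
    apply Subtype.ext
    rw [zpow_zero, Matrix.SpecialLinearGroup.coe_neg, Matrix.SpecialLinearGroup.coe_one]
    ext i j
    fin_cases i <;> fin_cases j <;> simp [ha, hb, hc, hd, Matrix.one_apply]

theorem rat_case (r : ℚ) :
    ∃ g₀ : SL2Z, mobiusSL g₀ (some (r : ℝ)) = some (r : ℝ) ∧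
      ∀ g : SL2Z, mobiusSL g (some (r : ℝ)) = some (r : ℝ) →
        ∃ n : ℤ, g = g₀ ^ n ∨ g = -(g₀ ^ n) := by
  have hcop : IsCoprime (r.num) (r.den : ℤ) := by
    rw [Int.isCoprime_iff_gcd_eq_one]
    exact r.reduced
  obtain ⟨u, v, huv⟩ := hcop
  set m : SL2Z := ⟨!![r.num, -v; (r.den : ℤ), u], by
    rw [Matrix.det_fin_two_of]; linarith [huv]⟩ with hm
  have hmnone : mobiusSL m none = some (r : ℝ) := by
    have hden : ((r.den : ℤ) : ℝ) ≠ 0 := by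
      simp only [Int.cast_natCast]
      exact_mod_cast r.den_ne_zero
    simp only [mobiusSL, mobius, Matrix.map_apply, hm]
    rw [if_neg (by simpa using hden)]
    congr 1
    rw [Rat.cast_def]
    push_cast
    norm_num
  have hminv : mobiusSL m⁻¹ (some (r : ℝ)) = none := by
    rw [← hmnone, ← mobiusSL_mul, inv_mul_cancel, mobiusSL_one]
  have hT : mobiusSL Tmat none = none := by
    simp [mobiusSL, mobius, Tmat, Matrix.map_apply]
  have hconj : ∀ n : ℤ, (m * Tmat * m⁻¹) ^ n = m * Tmat ^ n * m⁻¹ := by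
    intro n
    rw [← MulAut.conj_apply, ← map_zpow, MulAut.conj_apply]
  have hnegconj : ∀ n : ℤ, m * (-(Tmat ^ n)) * m⁻¹ = -(m * Tmat ^ n * m⁻¹) := by
    intro n
    apply Subtype.ext
    simp only [Matrix.SpecialLinearGroup.coe_mul, Matrix.SpecialLinearGroup.coe_neg,
      Matrix.mul_neg, Matrix.neg_mul]
  refine ⟨m * Tmat * m⁻¹, ?_, ?_⟩
  · rw [mobiusSL_mul, mobiusSL_mul, hminv, hT, hmnone]
  · intro g hg
    have hfixnone : mobiusSL (m⁻¹ * g * m) none = none := by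
      rw [mobiusSL_mul, mobiusSL_mul, hmnone, hg, hminv]
    obtain ⟨n, hn | hn⟩ := stab_none _ hfixnone
    · refine ⟨n, Or.inl ?_⟩
      rw [hconj]
      have : m * (m⁻¹ * g * m) * m⁻¹ = g := by group
      rw [← this, hn]
    · refine ⟨n, Or.inr ?_⟩
      rw [hconj]
      have : m * (m⁻¹ * g * m) * m⁻¹ = g := by group
      rw [← this, hn, hnegconj]


open Classical in
/-- For every point `x ∈ P¹(ℝ)`, the stabilizer of `x` in
`PSL₂(ℤ)` is cyclic: there is `g₀ ∈ SL₂(ℤ)` fixing `x` such that every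
`g ∈ SL₂(ℤ)` fixing `x` is, up to sign (i.e. in `PSL₂(ℤ)`), an integer power
of `g₀`. -/
theorem psl2z_stabilizer_cyclic (x : Option ℝ) :
    ∃ g₀ : Matrix.SpecialLinearGroup (Fin 2) ℤ, mobiusSL g₀ x = x ∧
      ∀ g : Matrix.SpecialLinearGroup (Fin 2) ℤ, mobiusSL g x = x →
        ∃ n : ℤ, g = g₀ ^ n ∨ g = -(g₀ ^ n) := by
  cases x with
  | none =>
    refine ⟨Tmat, ?_, stab_none⟩
    simp [mobiusSL, mobius, Tmat, Matrix.map_apply]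
  | some r =>
    by_cases hrat : ∃ ρ : ℚ, (ρ : ℝ) = r
    · obtain ⟨ρ, rfl⟩ := hrat
      exact rat_case ρ
    · have hx : Irrational r := fun ⟨q, hq⟩ => hrat ⟨q, hq⟩
      by_cases hquad : ∃ p q : ℚ, r ^ 2 = (p : ℝ) * r + q
      · obtain ⟨p, q, hpq⟩ := hquad
        exact quad_case r hx p q hpq
      · exact nonquad_case r hx hquad
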